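/- Let L be a locally finite modular lattice and let S be a set of covering pairs of L that is closed under cover-projectivity. Let x ≤ y in L and let x = c₀ ⋖ c₁ ⋖ ⋯ ⋖ cₙ = y and x = d₀ ⋖ d₁ ⋖ ⋯ ⋖ d_m = y be two covering paths from x to y. Then some consecutive pair (cᵢ, cᵢ₊₁) belongs to S if and only if some consecutive pair (dⱼ, dⱼ₊₁) belongs to S. -/

import Mathlib

/-- A set `S` of covering pairs of a lattice is closed under cover-projectivity. -/
def CoverProjClosed {L : Type*} [Lattice L] (S : Set (L × L)) : Prop :=
  ∀ x y : L, x ≠ y → x ⊓ y ⋖ x → x ⊓ y ⋖ y → x ⋖ x ⊔ y → y ⋖ x ⊔ y →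
    (((x ⊓ y, x) ∈ S ↔ (y, x ⊔ y) ∈ S) ∧ ((x ⊓ y, y) ∈ S ↔ (x, x ⊔ y) ∈ S))

/-- Prepend an element to a sequence. -/
def prep {L : Type*} (a : L) (e : ℕ → L) : ℕ → L
  | 0 => a
  | i + 1 => e i

lemma exists_lt_succ_shift {P : ℕ → Prop} {n : ℕ} :
    (∃ i < n + 1, P i) ↔ P 0 ∨ ∃ i < n, P (i + 1) := by
  constructor
  · rintro ⟨i, hi, h⟩
    cases i with
    | zero => exact Or.inl h
    | succ j => exact Or.inr ⟨j, by omega, h⟩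
  · rintro (h | ⟨i, hi, h⟩)
    exacts [⟨0, by omega, h⟩, ⟨i + 1, by omega, h⟩]

lemma chain_le {L : Type*} [PartialOrder L] {c : ℕ → L} {n : ℕ}
    (hc : ∀ i < n, c i ⋖ c (i + 1)) {i : ℕ} (h : i ≤ n) : c i ≤ c n := by
  induction n with
  | zero => obtain rfl : i = 0 := Nat.le_zero.1 h; exact le_rfl
  | succ k ih =>
    rcases Nat.eq_or_lt_of_le h with rfl | h'
    · exact le_rfl
    · exact le_trans (ih (fun j hj => hc j (by omega)) (by omega)) (hc k (by omega)).le

lemma exists_path {L : Type*} [Lattice L] [LocallyFiniteOrder L] :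
    ∀ N : ℕ, ∀ a b : L, (Finset.Icc a b).card ≤ N → a ≤ b →
      ∃ k, ∃ e : ℕ → L, e 0 = a ∧ e k = b ∧ ∀ i < k, e i ⋖ e (i + 1) := by
  intro N
  induction N with
  | zero =>
    intro a b hcard hab
    have ha : a ∈ Finset.Icc a b := Finset.mem_Icc.2 ⟨le_rfl, hab⟩
    have := Finset.card_pos.2 ⟨a, ha⟩
    omega
  | succ N ih =>
    intro a b hcard hab
    rcases eq_or_lt_of_le hab with rfl | hlt
    · exact ⟨0, fun _ => a, rfl, rfl, fun i hi => absurd hi (by omega)⟩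
    · have hne : (Finset.Ioc a b).Nonempty := ⟨b, Finset.mem_Ioc.2 ⟨hlt, le_rfl⟩⟩
      obtain ⟨w, hw, hmin⟩ : ∃ w ∈ Finset.Ioc a b, ∀ u ∈ Finset.Ioc a b, ¬ u < w := by
        obtain ⟨w, hw, hmin⟩ := Finset.exists_minimal hne
        exact ⟨w, hw, fun u hu hlt => hlt.not_ge (hmin hu hlt.le)⟩
      rw [Finset.mem_Ioc] at hw
      have hcov : a ⋖ w := by
        refine ⟨hw.1, fun u hau huw => ?_⟩
        exact hmin u (Finset.mem_Ioc.2 ⟨hau, huw.le.trans hw.2⟩) huw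
      have hsub : Finset.Icc w b ⊂ Finset.Icc a b := by
        refine ⟨Finset.Icc_subset_Icc hw.1.le le_rfl, fun hsub => ?_⟩
        have := Finset.mem_Icc.1 (hsub (Finset.mem_Icc.2 ⟨le_rfl, hab⟩))
        exact hw.1.not_ge this.1
      have hcard' : (Finset.Icc w b).card ≤ N := by
        have := Finset.card_lt_card hsub
        omega
      obtain ⟨k, e, he0, hek, hch⟩ := ih w b hcard' hw.2
      refine ⟨k + 1, prep a e, rfl, hek, fun i hi => ?_⟩
      cases i with
      | zero => simpa [prep, he0] using hcov
      | succ j => exact hch j (by omega)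

lemma key {L : Type*} [Lattice L] [LocallyFiniteOrder L] [IsModularLattice L]
    (S : Set (L × L)) (hS : CoverProjClosed S) :
    ∀ n : ℕ, ∀ c : ℕ → L, (∀ i < n, c i ⋖ c (i + 1)) →
      ∀ m : ℕ, ∀ d : ℕ → L, d 0 = c 0 → d m = c n → (∀ j < m, d j ⋖ d (j + 1)) →
      n = m ∧ ((∃ i < n, (c i, c (i + 1)) ∈ S) ↔ (∃ j < m, (d j, d (j + 1)) ∈ S)) := by
  intro n
  induction n using Nat.strong_induction_on with
  | _ n ih =>
  intro c hc m d hd0 hdm hd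
  rcases Nat.eq_zero_or_pos n with rfl | hn
  · rcases Nat.eq_zero_or_pos m with rfl | hm
    · exact ⟨rfl, by simp⟩
    · exfalso
      obtain ⟨m', rfl⟩ := Nat.exists_eq_succ_of_ne_zero hm.ne'
      have h1 : d 1 ≤ d (m' + 1) :=
        chain_le (c := fun j => d (j + 1)) (n := m') (fun j hj => hd (j + 1) (by omega))
          (Nat.zero_le m')
      have : d 0 < d 0 := by
        calc d 0 < d 1 := (hd 0 (by omega)).lt
        _ ≤ d (m' + 1) := h1
        _ = c 0 := hdm
        _ = d 0 := hd0.symm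
      exact lt_irrefl _ this
  · obtain ⟨n', rfl⟩ := Nat.exists_eq_succ_of_ne_zero hn.ne'
    rcases Nat.eq_zero_or_pos m with rfl | hm
    · exfalso
      have h1 : c 1 ≤ c (n' + 1) :=
        chain_le (c := fun i => c (i + 1)) (n := n') (fun i hi => hc (i + 1) (by omega))
          (Nat.zero_le n')
      have : c 0 < c 0 := by
        calc c 0 < c 1 := (hc 0 (by omega)).lt
        _ ≤ c (n' + 1) := h1
        _ = d 0 := hdm.symm
        _ = c 0 := hd0
      exact lt_irrefl _ this
    · obtain ⟨m', rfl⟩ := Nat.exists_eq_succ_of_ne_zero hm.ne'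
      have hx1 : c 0 ⋖ c 1 := hc 0 (by omega)
      have hy1 : c 0 ⋖ d 1 := by
        have := hd 0 (by omega)
        rwa [hd0] at this
      by_cases h1 : c 1 = d 1
      · obtain ⟨hlen, hiff⟩ := ih n' (by omega) (fun i => c (i + 1))
          (fun i hi => hc (i + 1) (by omega)) m' (fun j => d (j + 1)) h1.symm hdm
          (fun j hj => hd (j + 1) (by omega))
        refine ⟨by omega, ?_⟩
        rw [exists_lt_succ_shift, exists_lt_succ_shift]
        rw [hd0, h1] at *
        exact or_congr Iff.rfl hiff
      · -- c 1 ≠ d 1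
        have hinflt : c 1 ⊓ d 1 < c 1 := by
          rcases lt_or_eq_of_le (inf_le_left : c 1 ⊓ d 1 ≤ c 1) with h | h
          · exact h
          · exfalso
            have hle : c 1 ≤ d 1 := by
              have h2 : c 1 ⊓ d 1 ≤ d 1 := inf_le_right
              rwa [h] at h2
            exact hy1.2 hx1.lt (lt_of_le_of_ne hle h1)
        have hinf : c 1 ⊓ d 1 = c 0 := by
          have hle : c 0 ≤ c 1 ⊓ d 1 := le_inf hx1.le hy1.le
          rcases lt_or_eq_of_le hle with h | h
          · exact absurd hinflt (hx1.2 h)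
          · exact h.symm
        have hc1z : c 1 ⋖ c 1 ⊔ d 1 := by
          apply covBy_sup_of_inf_covBy_right
          rw [hinf]; exact hy1
        have hd1z : d 1 ⋖ c 1 ⊔ d 1 := by
          apply covBy_sup_of_inf_covBy_left
          rw [hinf]; exact hx1
        have hc1y : c 1 ≤ c (n' + 1) :=
          chain_le (c := fun i => c (i + 1)) (n := n') (fun i hi => hc (i + 1) (by omega))
            (Nat.zero_le n')
        have hd1y : d 1 ≤ c (n' + 1) := by
          have := chain_le (c := fun j => d (j + 1)) (n := m') (fun j hj => hd (j + 1) (by omega))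
            (Nat.zero_le m')
          exact le_trans this (le_of_eq hdm)
        have hzy : c 1 ⊔ d 1 ≤ c (n' + 1) := sup_le hc1y hd1y
        obtain ⟨k, e, he0, hek, hech⟩ :=
          exists_path (Finset.Icc (c 1 ⊔ d 1) (c (n' + 1))).card (c 1 ⊔ d 1) (c (n' + 1))
            le_rfl hzy
        -- path B : c 1, z = e 0, e 1, ..., e k = c (n'+1)
        have hBch : ∀ i < k + 1, prep (c 1) e i ⋖ prep (c 1) e (i + 1) := by
          intro i hi
          cases i with
          | zero => simpa [prep, he0] using hc1z
          | succ j => exact hech j (by omega)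
        have hCch : ∀ i < k + 1, prep (d 1) e i ⋖ prep (d 1) e (i + 1) := by
          intro i hi
          cases i with
          | zero => simpa [prep, he0] using hd1z
          | succ j => exact hech j (by omega)
        obtain ⟨hlen1, hiff1⟩ := ih n' (by omega) (fun i => c (i + 1))
          (fun i hi => hc (i + 1) (by omega)) (k + 1) (prep (c 1) e) rfl hek hBch
        obtain ⟨hlen2, hiff2⟩ := ih (k + 1) (by omega) (prep (d 1) e) hCch
          m' (fun j => d (j + 1)) rfl (hdm.trans hek.symm)
          (fun j hj => hd (j + 1) (by omega))
        have hswap := hS (c 1) (d 1) h1 (by rw [hinf]; exact hx1) (by rw [hinf]; exact hy1)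
          hc1z hd1z
        rw [hinf] at hswap
        refine ⟨by omega, ?_⟩
        rw [exists_lt_succ_shift, exists_lt_succ_shift]
        have e1 : (∃ i < n', (c (i + 1), c (i + 2)) ∈ S) ↔
            ((c 1, c 1 ⊔ d 1) ∈ S ∨ ∃ i < k, (e i, e (i + 1)) ∈ S) := by
          rw [hiff1, exists_lt_succ_shift]
          simp only [prep, he0]
        have e2 : (∃ j < m', (d (j + 1), d (j + 2)) ∈ S) ↔
            ((d 1, c 1 ⊔ d 1) ∈ S ∨ ∃ i < k, (e i, e (i + 1)) ∈ S) := by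
          rw [← hiff2, exists_lt_succ_shift]
          simp only [prep, he0]
        rw [hd0, e1, e2]
        rw [hswap.1, hswap.2]
        exact or_left_comm

/-- Given two covering paths from `x` to `y` in a locally finite modular lattice and a set
`S` of covering pairs closed under cover-projectivity, one path contains a covering pair in
`S` iff the other one does. -/
theorem stmt3 {L : Type*} [Lattice L] [LocallyFiniteOrder L] [IsModularLattice L]
    (S : Set (L × L)) (hS : CoverProjClosed S)
    (x y : L) (hxy : x ≤ y)
    (n : ℕ) (c : ℕ → L) (hc0 : c 0 = x) (hcn : c n = y)
    (hc : ∀ i < n, c i ⋖ c (i + 1))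
    (m : ℕ) (d : ℕ → L) (hd0 : d 0 = x) (hdm : d m = y)
    (hd : ∀ j < m, d j ⋖ d (j + 1)) :
    (∃ i < n, (c i, c (i + 1)) ∈ S) ↔ (∃ j < m, (d j, d (j + 1)) ∈ S) := by
  exact (key S hS n c hc m d (hd0.trans hc0.symm) (hdm.trans hcn.symm) hd).2
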